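/- Let s₁ be the real 4-dimensional Lie algebra with basis e₁, e₂, e₃, e₄ and nonzero brackets ⁅e₂, e₄⁆ = −e₁ and ⁅e₃, e₄⁆ = −e₃ (all other brackets of basis elements zero, extended bilinearly and antisymmetrically), and let w₀ = e₁ ⊗ e₂ − e₂ ⊗ e₁ ∈ s₁ ⊗[ℝ] s₁. Then the orbit of w₀ under the maps T ⊗ T, for T ranging over all Lie algebra automorphisms of s₁, is exactly the set { λ • w₀ : λ ∈ ℝ, λ > 0 }. That is: for every Lie algebra automorphism T of s₁ there exists λ > 0 with (T ⊗ T) w₀ = λ • w₀, and for every λ > 0 there exists a Lie algebra automorphism T of s₁ with (T ⊗ T) w₀ = λ • w₀. -/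

import Mathlib

open TensorProduct

set_option maxHeartbeats 1000000 in
/-- For the real 4-dimensional Lie algebra `s₁` (Šnobl–Winternitz `s_{4,1}`), the
orbit of the bivector `w₀ = e₁ ⊗ e₂ - e₂ ⊗ e₁` under the maps `T ⊗ T`, with `T`
ranging over the Lie algebra automorphisms of `s₁`, is `{ λ • w₀ : λ > 0 }`. -/
theorem stmt_17 {L : Type*} [LieRing L] [LieAlgebra ℝ L]
    (b : Module.Basis (Fin 4) ℝ L)
    (h12 : ⁅b 0, b 1⁆ = 0) (h13 : ⁅b 0, b 2⁆ = 0) (h14 : ⁅b 0, b 3⁆ = 0)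
    (h23 : ⁅b 1, b 2⁆ = 0) (h24 : ⁅b 1, b 3⁆ = -b 0) (h34 : ⁅b 2, b 3⁆ = -b 2) :
    (∀ T : L ≃ₗ[ℝ] L, (∀ x y : L, T ⁅x, y⁆ = ⁅T x, T y⁆) →
        ∃ lam : ℝ, 0 < lam ∧
          TensorProduct.congr T T (b 0 ⊗ₜ[ℝ] b 1 - b 1 ⊗ₜ[ℝ] b 0) =
            lam • (b 0 ⊗ₜ[ℝ] b 1 - b 1 ⊗ₜ[ℝ] b 0)) ∧
      ∀ lam : ℝ, 0 < lam →
        ∃ T : L ≃ₗ[ℝ] L, (∀ x y : L, T ⁅x, y⁆ = ⁅T x, T y⁆) ∧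
          TensorProduct.congr T T (b 0 ⊗ₜ[ℝ] b 1 - b 1 ⊗ₜ[ℝ] b 0) =
            lam • (b 0 ⊗ₜ[ℝ] b 1 - b 1 ⊗ₜ[ℝ] b 0) := by
  classical
  -- reversed brackets
  have h21 : ⁅b 1, b 0⁆ = (0:L) := by rw [← lie_skew, h12, neg_zero]
  have h31 : ⁅b 2, b 0⁆ = (0:L) := by rw [← lie_skew, h13, neg_zero]
  have h41 : ⁅b 3, b 0⁆ = (0:L) := by rw [← lie_skew, h14, neg_zero]
  have h32 : ⁅b 2, b 1⁆ = (0:L) := by rw [← lie_skew, h23, neg_zero]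
  have h42 : ⁅b 3, b 1⁆ = b 0 := by rw [← lie_skew, h24, neg_neg]
  have h43 : ⁅b 3, b 2⁆ = b 2 := by rw [← lie_skew, h34, neg_neg]
  -- the bracket in coordinates
  have hb : ∀ x y : L, ⁅x, y⁆ =
      (b.repr x 3 * b.repr y 1 - b.repr x 1 * b.repr y 3) • b 0
        + (b.repr x 3 * b.repr y 2 - b.repr x 2 * b.repr y 3) • b 2 := by
    intro x y
    have hx := b.sum_repr x
    have hy := b.sum_repr y
    rw [Fin.sum_univ_four] at hx hy
    conv_lhs => rw [← hx, ← hy]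
    simp only [add_lie, lie_add, smul_lie, lie_smul, lie_self,
      h12, h13, h14, h23, h24, h34, h21, h31, h41, h32, h42, h43,
      smul_zero, zero_add, add_zero, smul_neg, smul_smul]
    module
  have hc0 : ∀ x y : L, b.repr ⁅x,y⁆ 0
      = b.repr x 3 * b.repr y 1 - b.repr x 1 * b.repr y 3 := by
    intro x y; rw [hb x y]; simp [Module.Basis.repr_self, Finsupp.single_apply]
  have hc1 : ∀ x y : L, b.repr ⁅x,y⁆ 1 = 0 := by
    intro x y; rw [hb x y]; simp [Module.Basis.repr_self, Finsupp.single_apply]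
  have hc2 : ∀ x y : L, b.repr ⁅x,y⁆ 2
      = b.repr x 3 * b.repr y 2 - b.repr x 2 * b.repr y 3 := by
    intro x y; rw [hb x y]; simp [Module.Basis.repr_self, Finsupp.single_apply]
  have hc3 : ∀ x y : L, b.repr ⁅x,y⁆ 3 = 0 := by
    intro x y; rw [hb x y]; simp [Module.Basis.repr_self, Finsupp.single_apply]
  constructor
  · -- every automorphism scales w₀ by a positive factor
    intro T hT
    have hT03 : ⁅T (b 0), T (b 3)⁆ = 0 := by rw [← hT, h14, map_zero]
    have hT12 : ⁅T (b 1), T (b 2)⁆ = 0 := by rw [← hT, h23, map_zero]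
    have hT13 : ⁅T (b 1), T (b 3)⁆ = -T (b 0) := by rw [← hT, h24, map_neg]
    have hT23 : ⁅T (b 2), T (b 3)⁆ = -T (b 2) := by rw [← hT, h34, map_neg]
    have hq1 : b.repr (T (b 2)) 1 = 0 := by
      have := congrArg (fun z => b.repr z 1) hT23
      simpa [hc1] using this.symm
    have hq3 : b.repr (T (b 2)) 3 = 0 := by
      have := congrArg (fun z => b.repr z 3) hT23
      simpa [hc3] using this.symm
    have hq0 : b.repr (T (b 2)) 0 = 0 := by
      have := congrArg (fun z => b.repr z 0) hT23
      simp only [hc0, map_neg, Finsupp.coe_neg, Pi.neg_apply, hq1, hq3] at this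
      linarith
    have hq2 : b.repr (T (b 2)) 2 ≠ 0 := by
      intro h
      have hz : T (b 2) = 0 := by
        have hs := b.sum_repr (T (b 2))
        rw [Fin.sum_univ_four, hq0, hq1, h, hq3] at hs
        simpa using hs.symm
      exact (b.ne_zero 2) (T.injective (by simpa using hz))
    have hr3 : b.repr (T (b 3)) 3 = 1 := by
      have := congrArg (fun z => b.repr z 2) hT23
      simp only [hc2, map_neg, Finsupp.coe_neg, Pi.neg_apply, hq3] at this
      have h2 : b.repr (T (b 2)) 2 * b.repr (T (b 3)) 3 = b.repr (T (b 2)) 2 * 1 := by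
        rw [mul_one]; nlinarith [this]
      exact mul_left_cancel₀ hq2 h2
    have ha1 : b.repr (T (b 0)) 1 = 0 := by
      have := congrArg (fun z => b.repr z 1) hT13
      simpa [hc1] using this.symm
    have ha3 : b.repr (T (b 0)) 3 = 0 := by
      have := congrArg (fun z => b.repr z 3) hT13
      simpa [hc3] using this.symm
    have ha2 : b.repr (T (b 0)) 2 = 0 := by
      have := congrArg (fun z => b.repr z 2) hT03
      simp only [hc2, ha3, hr3, map_zero, Finsupp.coe_zero, Pi.zero_apply] at this
      linarith
    have hu0 : T (b 0) = b.repr (T (b 0)) 0 • b 0 := by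
      have hs := b.sum_repr (T (b 0))
      rw [Fin.sum_univ_four, ha1, ha2, ha3] at hs
      simpa using hs.symm
    have ha0 : b.repr (T (b 0)) 0 ≠ 0 := by
      intro h
      rw [h, zero_smul] at hu0
      exact (b.ne_zero 0) (T.injective (by simpa using hu0))
    have hp3 : b.repr (T (b 1)) 3 = 0 := by
      have := congrArg (fun z => b.repr z 2) hT12
      simp only [hc2, hq3, map_zero, Finsupp.coe_zero, Pi.zero_apply, mul_zero,
        sub_zero] at this
      rcases mul_eq_zero.1 this with h | h
      · exact h
      · exact absurd h hq2
    have hp1 : b.repr (T (b 1)) 1 = b.repr (T (b 0)) 0 := by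
      have := congrArg (fun z => b.repr z 0) hT13
      simp only [hc0, map_neg, Finsupp.coe_neg, Pi.neg_apply, hp3, hr3, zero_mul,
        mul_one] at this
      linarith
    have hp2 : b.repr (T (b 1)) 2 = 0 := by
      have := congrArg (fun z => b.repr z 2) hT13
      simp only [hc2, map_neg, Finsupp.coe_neg, Pi.neg_apply, hp3, hr3, zero_mul,
        mul_one, ha2] at this
      linarith
    have hu1 : T (b 1) = b.repr (T (b 1)) 0 • b 0 + b.repr (T (b 0)) 0 • b 1 := by
      have hs := b.sum_repr (T (b 1))
      rw [Fin.sum_univ_four, hp1, hp2, hp3] at hs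
      simpa using hs.symm
    obtain ⟨A, hA⟩ : ∃ A, b.repr (T (b 0)) 0 = A := ⟨_, rfl⟩
    rw [hA] at hu0 hu1 ha0
    refine ⟨A ^ 2, by positivity, ?_⟩
    rw [map_sub, TensorProduct.congr_tmul, TensorProduct.congr_tmul, hu0, hu1]
    simp only [tmul_add, add_tmul, tmul_smul, ← smul_tmul', smul_smul, smul_sub, smul_add]
    module
  · -- every positive factor is realized by an automorphism
    intro lam hlam
    set s := Real.sqrt lam with hsdef
    have hs0 : 0 < s := Real.sqrt_pos.2 hlam
    have hss : s * s = lam := Real.mul_self_sqrt hlam.le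
    set f : L →ₗ[ℝ] L := b.constr ℝ ![s • b 0, s • b 1, b 2, b 3] with hfdef
    set g : L →ₗ[ℝ] L := b.constr ℝ ![s⁻¹ • b 0, s⁻¹ • b 1, b 2, b 3] with hgdef
    have hf0 : f (b 0) = s • b 0 := by rw [hfdef]; simp
    have hf1 : f (b 1) = s • b 1 := by rw [hfdef]; simp
    have hf2 : f (b 2) = b 2 := by rw [hfdef]; simp
    have hf3 : f (b 3) = b 3 := by rw [hfdef]; simp
    have hg0 : g (b 0) = s⁻¹ • b 0 := by rw [hgdef]; simp
    have hg1 : g (b 1) = s⁻¹ • b 1 := by rw [hgdef]; simp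
    have hg2 : g (b 2) = b 2 := by rw [hgdef]; simp
    have hg3 : g (b 3) = b 3 := by rw [hgdef]; simp
    have hfg : f ∘ₗ g = LinearMap.id := by
      refine b.ext fun i => ?_
      fin_cases i <;>
        simp [hg0, hg1, hg2, hg3, hf0, hf1, hf2, hf3, smul_smul,
          mul_inv_cancel₀ hs0.ne', inv_mul_cancel₀ hs0.ne']
    have hgf : g ∘ₗ f = LinearMap.id := by
      refine b.ext fun i => ?_
      fin_cases i <;>
        simp [hg0, hg1, hg2, hg3, hf0, hf1, hf2, hf3, smul_smul,
          mul_inv_cancel₀ hs0.ne', inv_mul_cancel₀ hs0.ne']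
    refine ⟨LinearEquiv.ofLinear f g hfg hgf, fun x y => ?_, ?_⟩
    · have hx := b.sum_repr x
      have hy := b.sum_repr y
      rw [Fin.sum_univ_four] at hx hy
      rw [← hx, ← hy]
      simp only [LinearEquiv.ofLinear_apply, map_add, map_smul, lie_add, add_lie, lie_smul,
        smul_lie, lie_self, h12, h13, h14, h23, h24, h34, h21, h31, h41, h32, h42, h43,
        hf0, hf1, hf2, hf3, map_neg, map_zero, smul_zero, zero_add, add_zero, smul_neg,
        smul_smul, smul_add]
      module
    · rw [map_sub, TensorProduct.congr_tmul, TensorProduct.congr_tmul]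
      simp only [LinearEquiv.ofLinear_apply, hf0, hf1, tmul_smul, ← smul_tmul',
        smul_smul, smul_sub]
      rw [hss]
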